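/- Lemma 4, first claim (the set B is a basis). With the field tower of the context, let l = s̄^{n̄} ∏_{e=1}^{n̄} p_e, and identify each index i ∈ {0,…,l−1} with a tuple ((i_e)_{1≤e≤n̄}, (i'_e)_{1≤e≤n̄}) where 0 ≤ i_e ≤ p_e − 1 and 0 ≤ i'_e ≤ s̄ − 1. For each i, let 𝓔_i = {e ∈ {1,…,n̄} : (i_e, i'_e) = (p_e − 1, s̄ − 1)} and define b_i = (∏_{x=1}^{n̄} α_x^{u i_x}) · (∏_{y∈𝓔_i} ∑_{j=0}^{s̄−1} β_y^j) · (∏_{y∉𝓔_i} β_y^{i'_y}). Then B = {b_i : 0 ≤ i ≤ l−1} is an F-basis of K = K_{n̄}. -/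

import Mathlib

section lemma4aux
variable {F Ω : Type*} [Field F] [Field Ω] [Algebra F Ω]

lemma lemma4_aux_combine {ι κ : Type*} [Fintype ι] [Fintype κ]
    (v : ι → Ω) (g : κ → Ω) (L M : IntermediateField F Ω) (hLM : L ≤ M)
    (hli : LinearIndependent F v)
    (hsp : ∀ x : Ω, x ∈ Submodule.span F (Set.range v) ↔ x ∈ L)
    (hgM : ∀ j, g j ∈ M)
    (hind : ∀ c : κ → Ω, (∀ j, c j ∈ L) → ∑ j, c j * g j = 0 → ∀ j, c j = 0)
    (hspan : ∀ x ∈ M, ∃ c : κ → Ω, (∀ j, c j ∈ L) ∧ x = ∑ j, c j * g j) :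
    LinearIndependent F (fun q : ι × κ => v q.1 * g q.2) ∧
    ∀ x : Ω, x ∈ Submodule.span F (Set.range (fun q : ι × κ => v q.1 * g q.2)) ↔ x ∈ M := by
  have hvL : ∀ i, v i ∈ L := fun i => (hsp (v i)).mp (Submodule.subset_span (Set.mem_range_self i))
  constructor
  · rw [Fintype.linearIndependent_iff]
    intro a ha
    have h1 : ∑ j : κ, (∑ i : ι, a (i, j) • v i) * g j = 0 := by
      rw [← ha, Fintype.sum_prod_type, Finset.sum_comm]
      congr 1; ext j
      rw [Finset.sum_mul]
      congr 1; ext i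
      rw [smul_mul_assoc]
    have h2 : ∀ j, (∑ i : ι, a (i, j) • v i) = 0 := by
      apply hind _ _ h1
      intro j
      refine sum_mem fun i _ => ?_
      rw [Algebra.smul_def]
      exact mul_mem (L.algebraMap_mem _) (hvL i)
    intro q
    exact Fintype.linearIndependent_iff.mp hli (fun i => a (i, q.2)) (h2 q.2) q.1
  · intro x
    constructor
    · intro hx
      have hle : Submodule.span F (Set.range (fun q : ι × κ => v q.1 * g q.2)) ≤
          Subalgebra.toSubmodule M.toSubalgebra := by
        rw [Submodule.span_le]
        rintro _ ⟨q, rfl⟩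
        show v q.1 * g q.2 ∈ M
        exact mul_mem (hLM (hvL q.1)) (hgM q.2)
      exact hle hx
    · intro hx
      obtain ⟨c, hc, rfl⟩ := hspan x hx
      apply sum_mem
      intro j _
      have hcj : c j ∈ Submodule.span F (Set.range v) := (hsp (c j)).mpr (hc j)
      have : ∀ y ∈ Submodule.span F (Set.range v),
          y * g j ∈ Submodule.span F (Set.range (fun q : ι × κ => v q.1 * g q.2)) := by
        intro y hy
        induction hy using Submodule.span_induction with
        | mem z hz =>
          obtain ⟨i, rfl⟩ := hz
          exact Submodule.subset_span ⟨(i, j), rfl⟩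
        | zero => simp
        | add y z _ _ hy hz => rw [add_mul]; exact Submodule.add_mem _ hy hz
        | smul a y _ hy => rw [smul_mul_assoc]; exact Submodule.smul_mem _ a hy
      exact this _ hcj

lemma lemma4_aux_step (pe m u' : ℕ) (hpe : 0 < pe) (αe βe : Ω) (L L' M : IntermediateField F Ω)
    (hLL' : L ≤ L') (hL'M : L' ≤ M) (hα : αe ∈ L') (hβ : βe ∈ M)
    (hαind : ∀ c : Fin pe → Ω, (∀ i, c i ∈ L) → ∑ i, c i * αe ^ (u' * i.1) = 0 → ∀ i, c i = 0)
    (hαspan : ∀ x ∈ L', ∃ c : Fin pe → Ω, (∀ i, c i ∈ L) ∧ x = ∑ i, c i * αe ^ (u' * i.1))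
    (hβind : ∀ c : Fin (m+1) → Ω, (∀ i, c i ∈ L') → ∑ i, c i * βe ^ i.1 = 0 → ∀ i, c i = 0)
    (hβspan : ∀ x ∈ M, ∃ c : Fin (m+1) → Ω, (∀ i, c i ∈ L') ∧ x = ∑ i, c i * βe ^ i.1) :
    (∀ q : Fin pe × Fin (m+1),
      (αe ^ (u' * q.1.1) * (if q.1.1 = pe - 1 ∧ q.2.1 = m then ∑ j ∈ Finset.range (m+1), βe ^ j
        else βe ^ q.2.1)) ∈ M) ∧
    (∀ c : Fin pe × Fin (m+1) → Ω, (∀ q, c q ∈ L) →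
      ∑ q, c q * (αe ^ (u' * q.1.1) * (if q.1.1 = pe - 1 ∧ q.2.1 = m then
        ∑ j ∈ Finset.range (m+1), βe ^ j else βe ^ q.2.1)) = 0 → ∀ q, c q = 0) ∧
    (∀ x ∈ M, ∃ c : Fin pe × Fin (m+1) → Ω, (∀ q, c q ∈ L) ∧
      x = ∑ q, c q * (αe ^ (u' * q.1.1) * (if q.1.1 = pe - 1 ∧ q.2.1 = m then
        ∑ j ∈ Finset.range (m+1), βe ^ j else βe ^ q.2.1))) := by
  set C : Fin pe × Fin (m+1) → Ω := fun q => αe ^ (u' * q.1.1) * βe ^ q.2.1 with hC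
  set h : Fin pe × Fin (m+1) → Ω := fun q =>
    αe ^ (u' * q.1.1) * (if q.1.1 = pe - 1 ∧ q.2.1 = m then ∑ j ∈ Finset.range (m+1), βe ^ j
      else βe ^ q.2.1) with hh
  set a0 : Fin pe := ⟨pe - 1, by omega⟩ with ha0
  set top : Fin pe × Fin (m+1) := (a0, Fin.last m) with htop
  set Y : Ω := αe ^ (u' * (pe - 1)) * ∑ j ∈ Finset.range m, βe ^ j with hY
  have Cind : ∀ c : Fin pe × Fin (m+1) → Ω, (∀ q, c q ∈ L) →
      ∑ q, c q * C q = 0 → ∀ q, c q = 0 := by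
    intro c hc hsum
    have h1 : ∑ s : Fin (m+1), (∑ a : Fin pe, c (a, s) * αe ^ (u' * a.1)) * βe ^ s.1 = 0 := by
      rw [← hsum, Fintype.sum_prod_type, Finset.sum_comm]
      congr 1; ext s
      rw [Finset.sum_mul]
      congr 1; ext a
      rw [hC, mul_assoc]
    have h2 : ∀ s, (∑ a : Fin pe, c (a, s) * αe ^ (u' * a.1)) = 0 := by
      apply hβind _ _ h1
      intro s
      exact sum_mem fun a _ => mul_mem (hLL' (hc _)) (pow_mem hα _)
    intro q
    exact hαind (fun a => c (a, q.2)) (fun a => hc _) (h2 q.2) q.1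
  have Cspan : ∀ x ∈ M, ∃ c : Fin pe × Fin (m+1) → Ω, (∀ q, c q ∈ L) ∧
      x = ∑ q, c q * C q := by
    intro x hx
    obtain ⟨d, hd, rfl⟩ := hβspan x hx
    choose cc hcc1 hcc2 using fun s => hαspan (d s) (hd s)
    refine ⟨fun q => cc q.2 q.1, fun q => hcc1 _ _, ?_⟩
    rw [Fintype.sum_prod_type, Finset.sum_comm]
    congr 1; ext s
    rw [hcc2 s, Finset.sum_mul]
    congr 1; ext a
    rw [hC, mul_assoc]
  have SU : ∀ t : Ω, ∑ q : Fin pe × Fin (m+1),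
      (if q.1.1 = pe - 1 ∧ q.2.1 ≠ m then t else 0) * C q = t * Y := by
    intro t
    rw [Fintype.sum_prod_type]
    rw [Fintype.sum_eq_single a0 (by
      intro a hane
      apply Finset.sum_eq_zero
      intro s _
      have : ¬ (a.1 = pe - 1 ∧ s.1 ≠ m) := by
        rintro ⟨h1, -⟩
        exact hane (Fin.ext h1)
      rw [if_neg this, zero_mul])]
    rw [Fin.sum_univ_castSucc]
    have hlast : ((if (a0.1 = pe - 1 ∧ (Fin.last m).1 ≠ m) then t else 0) * C (a0, Fin.last m)) = 0 := by
      rw [if_neg (by simp), zero_mul]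
    rw [hlast, add_zero]
    have hterm : ∀ s : Fin m,
        (if ((a0, Fin.castSucc s).1.1 = pe - 1 ∧ ((a0, Fin.castSucc s).2.1 : ℕ) ≠ m) then t else 0)
          * C (a0, Fin.castSucc s) = t * (αe ^ (u' * (pe - 1)) * βe ^ (s.1 : ℕ)) := by
      intro s
      have hcond : ((a0, Fin.castSucc s).1.1 = pe - 1 ∧ ((a0, Fin.castSucc s).2.1 : ℕ) ≠ m) := by
        refine ⟨rfl, ?_⟩
        simp only [Fin.coe_castSucc]
        omega
      rw [if_pos hcond, hC]
      simp [ha0]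
    rw [Finset.sum_congr rfl (fun s _ => hterm s), hY]
    rw [Finset.mul_sum, Finset.mul_sum]
    rw [Fin.sum_univ_eq_sum_range (fun j => t * (αe ^ (u' * (pe - 1)) * βe ^ j)) m]
  have HI : ∀ c : Fin pe × Fin (m+1) → Ω,
      ∑ q, c q * h q = (∑ q, c q * C q) + c top * Y := by
    intro c
    have : ∀ q : Fin pe × Fin (m+1), c q * h q = c q * C q + (if q = top then c top * Y else 0) := by
      intro q
      by_cases hq : q = top
      · subst hq
        rw [if_pos rfl, hh, hC]
        simp only
        rw [if_pos (by simp [htop, ha0])]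
        rw [Finset.sum_range_succ]
        simp only [htop, ha0, Fin.val_last, hY]
        ring
      · rw [if_neg hq, add_zero, hh, hC]
        simp only
        rw [if_neg (by
          rintro ⟨h1, h2⟩
          exact hq (by rw [htop]; exact Prod.ext (Fin.ext h1) (Fin.ext (by simp [h2]))))]
    rw [Finset.sum_congr rfl (fun q _ => this q), Finset.sum_add_distrib,
      Finset.sum_ite_eq' Finset.univ top (fun _ => c top * Y), if_pos (Finset.mem_univ _)]
  have CI : ∀ c : Fin pe × Fin (m+1) → Ω,
      ∑ q, (c q + (if q.1.1 = pe - 1 ∧ q.2.1 ≠ m then c top else 0)) * C q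
        = (∑ q, c q * C q) + c top * Y := by
    intro c
    rw [← SU (c top), ← Finset.sum_add_distrib]
    apply Finset.sum_congr rfl
    intro q _
    rw [add_mul]
  refine ⟨?_, ?_, ?_⟩
  · intro q
    refine mul_mem (hL'M (pow_mem hα _)) ?_
    split
    · exact sum_mem fun k _ => pow_mem hβ k
    · exact pow_mem hβ _
  · intro c hc hsum
    have h0 : ∑ q, (c q + (if q.1.1 = pe - 1 ∧ q.2.1 ≠ m then c top else 0)) * C q = 0 := by
      rw [CI, ← HI, hsum]
    have hz := Cind _ (fun q => add_mem (hc q) (by split <;> [exact hc top; exact zero_mem _])) h0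
    have hct : c top = 0 := by
      have := hz top
      rwa [if_neg (by simp [htop]), add_zero] at this
    intro q
    have h3 := hz q
    rw [hct, ite_self, add_zero] at h3
    exact h3
  · intro x hx
    obtain ⟨c, hc, rfl⟩ := Cspan x hx
    set ct : Fin pe × Fin (m+1) → Ω := fun q =>
      c q - (if q.1.1 = pe - 1 ∧ q.2.1 ≠ m then c top else 0) with hct
    have hcttop : ct top = c top := by
      rw [hct]; simp [htop]
    refine ⟨ct, fun q => sub_mem (hc q) (by split <;> [exact hc top; exact zero_mem _]), ?_⟩
    rw [HI ct, hcttop]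
    have : ∑ q, ct q * C q = (∑ q, c q * C q) - c top * Y := by
      rw [← SU (c top), ← Finset.sum_sub_distrib]
      apply Finset.sum_congr rfl
      intro q _
      rw [hct, sub_mul]
    rw [this]; ring

end lemma4aux

def lemma4IdxEquiv (P : ℕ → Type*) (S : Type*) (n : ℕ) :
    (((x : Fin (n+1)) → P x.1) × (Fin (n+1) → S)) ≃
    ((((x : Fin n) → P x.1) × (Fin n → S)) × (P n × S)) where
  toFun iv := ((fun x => iv.1 x.castSucc, fun x => iv.2 x.castSucc),
    (iv.1 (Fin.last n), iv.2 (Fin.last n)))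
  invFun w := (Fin.snoc (α := fun i : Fin (n+1) => P i.1) w.1.1 w.2.1,
    Fin.snoc w.1.2 w.2.2)
  left_inv iv := by
    refine Prod.ext ?_ ?_
    · exact Fin.snoc_init_self iv.1
    · exact Fin.snoc_init_self iv.2
  right_inv w := by
    refine Prod.ext (Prod.ext ?_ ?_) (Prod.ext ?_ ?_)
    · funext x
      exact Fin.snoc_castSucc (α := fun i : Fin (n+1) => P i.1) (p := w.1.1) (x := w.2.1) (i := x)
    · funext x
      exact Fin.snoc_castSucc (α := fun _ : Fin (n+1) => S) (p := w.1.2) (x := w.2.2) (i := x)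
    · exact Fin.snoc_last (α := fun i : Fin (n+1) => P i.1) (p := w.1.1) (x := w.2.1)
    · exact Fin.snoc_last (α := fun _ : Fin (n+1) => S) (p := w.1.2) (x := w.2.2)

theorem lemma4_B_is_basis
    (F Ω : Type*) [Field F] [Fintype F] [Field Ω] [IsAlgClosed Ω] [Algebra F Ω]
    (q nb sb u : ℕ) (hq : Fintype.card F = q) (hsb : 1 ≤ sb) (hu : 0 < u)
    (p : ℕ → ℕ)
    (hp : ∀ e ∈ Finset.Icc 1 nb, (p e).Prime)
    (hpdistinct : ∀ e ∈ Finset.Icc 1 nb, ∀ e' ∈ Finset.Icc 1 nb, e ≠ e' → p e ≠ p e')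
    (hpmod : ∀ e ∈ Finset.Icc 1 nb, sb ∣ (p e - 1))
    (α β : ℕ → Ω)
    (K Kf : ℕ → IntermediateField F Ω)
    (hK0 : K 0 = ⊥)
    (hKf : ∀ e ∈ Finset.Icc 1 nb,
      Kf e = K (e - 1) ⊔ IntermediateField.adjoin F {α e})
    (hK : ∀ e ∈ Finset.Icc 1 nb,
      K e = Kf e ⊔ IntermediateField.adjoin F {β e})
    (hαbasis : ∀ e ∈ Finset.Icc 1 nb,
      (∀ c : Fin (p e) → Ω, (∀ i, c i ∈ K (e - 1)) →
        ∑ i, c i * (α e) ^ (u * i.1) = 0 → ∀ i, c i = 0) ∧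
      (∀ x ∈ Kf e, ∃ c : Fin (p e) → Ω, (∀ i, c i ∈ K (e - 1)) ∧
        x = ∑ i, c i * (α e) ^ (u * i.1)))
    (hβbasis : ∀ e ∈ Finset.Icc 1 nb,
      (∀ c : Fin sb → Ω, (∀ i, c i ∈ Kf e) →
        ∑ i, c i * (β e) ^ i.1 = 0 → ∀ i, c i = 0) ∧
      (∀ x ∈ K e, ∃ c : Fin sb → Ω, (∀ i, c i ∈ Kf e) ∧
        x = ∑ i, c i * (β e) ^ i.1))
    (b : (((x : Fin nb) → Fin (p (x.1 + 1))) × (Fin nb → Fin sb)) → Ω)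
    (hb : ∀ iv, b iv =
      (∏ x : Fin nb, (α (x.1 + 1)) ^ (u * (iv.1 x).1)) *
        ∏ y : Fin nb,
          (if (iv.1 y).1 = p (y.1 + 1) - 1 ∧ (iv.2 y).1 = sb - 1 then
            ∑ j ∈ Finset.range sb, (β (y.1 + 1)) ^ j
          else (β (y.1 + 1)) ^ (iv.2 y).1)) :
    LinearIndependent F b ∧
      (Submodule.span F (Set.range b) : Set Ω) = (K nb : Set Ω) := by
  obtain ⟨m, rfl⟩ : ∃ m, sb = m + 1 := ⟨sb - 1, by omega⟩
  have key : ∀ n, n ≤ nb →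
      LinearIndependent F (fun iv : ((x : Fin n) → Fin (p (x.1 + 1))) × (Fin n → Fin (m+1)) =>
        (∏ x : Fin n, (α (x.1 + 1)) ^ (u * (iv.1 x).1)) *
          ∏ y : Fin n,
            (if (iv.1 y).1 = p (y.1 + 1) - 1 ∧ (iv.2 y).1 = m + 1 - 1 then
              ∑ j ∈ Finset.range (m+1), (β (y.1 + 1)) ^ j
            else (β (y.1 + 1)) ^ (iv.2 y).1)) ∧
      ∀ z : Ω, z ∈ Submodule.span F
        (Set.range (fun iv : ((x : Fin n) → Fin (p (x.1 + 1))) × (Fin n → Fin (m+1)) =>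
        (∏ x : Fin n, (α (x.1 + 1)) ^ (u * (iv.1 x).1)) *
          ∏ y : Fin n,
            (if (iv.1 y).1 = p (y.1 + 1) - 1 ∧ (iv.2 y).1 = m + 1 - 1 then
              ∑ j ∈ Finset.range (m+1), (β (y.1 + 1)) ^ j
            else (β (y.1 + 1)) ^ (iv.2 y).1))) ↔ z ∈ K n := by
    intro n
    induction n with
    | zero =>
      intro _
      have hone : (fun iv : ((x : Fin 0) → Fin (p (x.1 + 1))) × (Fin 0 → Fin (m+1)) =>
          (∏ x : Fin 0, (α (x.1 + 1)) ^ (u * (iv.1 x).1)) *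
            ∏ y : Fin 0,
              (if (iv.1 y).1 = p (y.1 + 1) - 1 ∧ (iv.2 y).1 = m + 1 - 1 then
                ∑ j ∈ Finset.range (m+1), (β (y.1 + 1)) ^ j
              else (β (y.1 + 1)) ^ (iv.2 y).1)) = fun _ => (1 : Ω) := by
        funext iv; simp
      haveI : Unique ((x : Fin 0) → Fin (p (x.1 + 1))) :=
        ⟨⟨fun x => x.elim0⟩, fun f => funext fun x => x.elim0⟩
      haveI : Unique (Fin 0 → Fin (m+1)) :=
        ⟨⟨fun x => x.elim0⟩, fun f => funext fun x => x.elim0⟩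
      haveI : Unique (((x : Fin 0) → Fin (p (x.1 + 1))) × (Fin 0 → Fin (m+1))) :=
        ⟨⟨(default, default)⟩, fun w => Prod.ext (funext fun x => x.elim0) (funext fun x => x.elim0)⟩
      rw [hone]
      constructor
      · exact linearIndependent_unique_iff.mpr one_ne_zero
      · intro z
        rw [hK0, Set.range_const, Submodule.mem_span_singleton]
        constructor
        · rintro ⟨a, rfl⟩
          exact IntermediateField.mem_bot.mpr ⟨a, by rw [Algebra.algebraMap_eq_smul_one]⟩
        · intro hz
          obtain ⟨a, rfl⟩ := IntermediateField.mem_bot.mp hz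
          exact ⟨a, by rw [Algebra.algebraMap_eq_smul_one]⟩
    | succ n ih =>
      intro hn1
      obtain ⟨ihli, ihsp⟩ := ih (by omega)
      have hmem : n + 1 ∈ Finset.Icc 1 nb := Finset.mem_Icc.mpr ⟨by omega, hn1⟩
      have hKle : K n ≤ Kf (n+1) := by
        rw [hKf _ hmem]
        simpa using le_sup_left
      have hKfle : Kf (n+1) ≤ K (n+1) := by
        rw [hK _ hmem]
        exact le_sup_left
      have hαmem : α (n+1) ∈ Kf (n+1) := by
        rw [hKf _ hmem]
        exact SetLike.le_def.mp le_sup_right (IntermediateField.mem_adjoin_simple_self F (α (n+1)))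
      have hβmem : β (n+1) ∈ K (n+1) := by
        rw [hK _ hmem]
        exact SetLike.le_def.mp le_sup_right (IntermediateField.mem_adjoin_simple_self F (β (n+1)))
      obtain ⟨hαind, hαspan⟩ := hαbasis _ hmem
      obtain ⟨hβind, hβspan⟩ := hβbasis _ hmem
      simp only [Nat.add_sub_cancel] at hαind hαspan
      have step := lemma4_aux_step (p (n+1)) m u (hp _ hmem).pos (α (n+1)) (β (n+1))
        (K n) (Kf (n+1)) (K (n+1)) hKle hKfle hαmem hβmem hαind hαspan hβind hβspan
      obtain ⟨hM, hind, hspan⟩ := step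
      have comb := lemma4_aux_combine
        (v := fun iv : ((x : Fin n) → Fin (p (x.1 + 1))) × (Fin n → Fin (m+1)) =>
          (∏ x : Fin n, (α (x.1 + 1)) ^ (u * (iv.1 x).1)) *
            ∏ y : Fin n,
              (if (iv.1 y).1 = p (y.1 + 1) - 1 ∧ (iv.2 y).1 = m + 1 - 1 then
                ∑ j ∈ Finset.range (m+1), (β (y.1 + 1)) ^ j
              else (β (y.1 + 1)) ^ (iv.2 y).1))
        (g := fun q : Fin (p (n+1)) × Fin (m+1) =>
          (α (n+1)) ^ (u * q.1.1) * (if q.1.1 = p (n+1) - 1 ∧ q.2.1 = m then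
            ∑ j ∈ Finset.range (m+1), (β (n+1)) ^ j else (β (n+1)) ^ q.2.1))
        (K n) (K (n+1)) (le_trans hKle hKfle) ihli ihsp hM hind hspan
      set E := lemma4IdxEquiv (fun k => Fin (p (k+1))) (Fin (m+1)) n with hE
      have hbe : (fun iv : ((x : Fin (n+1)) → Fin (p (x.1 + 1))) × (Fin (n+1) → Fin (m+1)) =>
          (∏ x : Fin (n+1), (α (x.1 + 1)) ^ (u * (iv.1 x).1)) *
            ∏ y : Fin (n+1),
              (if (iv.1 y).1 = p (y.1 + 1) - 1 ∧ (iv.2 y).1 = m + 1 - 1 then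
                ∑ j ∈ Finset.range (m+1), (β (y.1 + 1)) ^ j
              else (β (y.1 + 1)) ^ (iv.2 y).1)) =
          (fun w : (((x : Fin n) → Fin (p (x.1 + 1))) × (Fin n → Fin (m+1))) ×
              (Fin (p (n+1)) × Fin (m+1)) =>
            ((∏ x : Fin n, (α (x.1 + 1)) ^ (u * (w.1.1 x).1)) *
              ∏ y : Fin n,
                (if (w.1.1 y).1 = p (y.1 + 1) - 1 ∧ (w.1.2 y).1 = m + 1 - 1 then
                  ∑ j ∈ Finset.range (m+1), (β (y.1 + 1)) ^ j
                else (β (y.1 + 1)) ^ (w.1.2 y).1)) *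
              ((α (n+1)) ^ (u * w.2.1.1) * (if w.2.1.1 = p (n+1) - 1 ∧ w.2.2.1 = m then
                ∑ j ∈ Finset.range (m+1), (β (n+1)) ^ j else (β (n+1)) ^ w.2.2.1))) ∘ E := by
        funext iv
        simp only [Function.comp_apply, hE, lemma4IdxEquiv, Equiv.coe_fn_mk]
        rw [Fin.prod_univ_castSucc, Fin.prod_univ_castSucc]
        simp only [Fin.coe_castSucc, Fin.val_last, Nat.add_sub_cancel]
        ring
      rw [hbe]
      constructor
      · exact comb.1.comp E E.injective
      · intro z
        rw [Set.range_comp, Equiv.range_eq_univ, Set.image_univ]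
        exact comb.2 z
  obtain ⟨kli, ksp⟩ := key nb le_rfl
  have hbeq : b = (fun iv : ((x : Fin nb) → Fin (p (x.1 + 1))) × (Fin nb → Fin (m+1)) =>
      (∏ x : Fin nb, (α (x.1 + 1)) ^ (u * (iv.1 x).1)) *
        ∏ y : Fin nb,
          (if (iv.1 y).1 = p (y.1 + 1) - 1 ∧ (iv.2 y).1 = m + 1 - 1 then
            ∑ j ∈ Finset.range (m+1), (β (y.1 + 1)) ^ j
          else (β (y.1 + 1)) ^ (iv.2 y).1)) := funext hb
  rw [hbeq]
  refine ⟨kli, ?_⟩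
  ext z
  simp only [SetLike.mem_coe]
  exact ksp z
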